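/- Let U ⊆ ℂ be a nonempty open connected set, let v : ℂ → ℂ be differentiable on U, let E ∈ ℂ, and let Ξ : ℂ → ℂ be three times differentiable on U with Ξ'''(x) − 4(v(x) − E)·Ξ'(x) − 2v'(x)·Ξ(x) = 0 for all x ∈ U. Then the function Q(x) := Ξ(x)²·(E − v(x)) + (1/2)·Ξ(x)·Ξ''(x) − (1/4)·Ξ'(x)² is constant on U. -/

import Mathlib

/-- If `Ξ` solves the third-order equation `Ξ''' - 4(v - E) Ξ' - 2 v' Ξ = 0` on a nonempty
open connected set `U ⊆ ℂ`, then `Q = Ξ²(E - v) + (1/2) Ξ Ξ'' - (1/4) (Ξ')²` is constant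
on `U`. -/
theorem Q_is_constant
    (U : Set ℂ) (hU : IsOpen U) (hUc : IsConnected U)
    (v : ℂ → ℂ) (E : ℂ)
    (hv : ∀ x ∈ U, DifferentiableAt ℂ v x)
    (Ξ : ℂ → ℂ)
    (hΞ : ∀ x ∈ U, DifferentiableAt ℂ Ξ x)
    (hΞ' : ∀ x ∈ U, DifferentiableAt ℂ (deriv Ξ) x)
    (hΞ'' : ∀ x ∈ U, DifferentiableAt ℂ (deriv (deriv Ξ)) x)
    (hode : ∀ x ∈ U, deriv (deriv (deriv Ξ)) x - 4 * (v x - E) * deriv Ξ x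
      - 2 * deriv v x * Ξ x = 0) :
    ∀ x ∈ U, ∀ y ∈ U,
      Ξ x ^ 2 * (E - v x) + (1/2) * Ξ x * deriv (deriv Ξ) x - (1/4) * (deriv Ξ x) ^ 2
      = Ξ y ^ 2 * (E - v y) + (1/2) * Ξ y * deriv (deriv Ξ) y - (1/4) * (deriv Ξ y) ^ 2 := by
  set Q : ℂ → ℂ := fun x =>
    Ξ x ^ 2 * (E - v x) + (1/2) * Ξ x * deriv (deriv Ξ) x - (1/4) * (deriv Ξ x) ^ 2 with hQ
  -- Q has zero derivative on U
  have key : ∀ x ∈ U, HasDerivAt Q 0 x := by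
    intro x hx
    have h0 := (hΞ x hx).hasDerivAt
    have h1 := (hΞ' x hx).hasDerivAt
    have h2 := (hΞ'' x hx).hasDerivAt
    have hv0 := (hv x hx).hasDerivAt
    have h1' : HasDerivAt (deriv Ξ) (deriv (deriv Ξ) x) x := by
      simpa [h1.deriv] using h1
    have h2' : HasDerivAt (deriv (deriv Ξ)) (deriv (deriv (deriv Ξ)) x) x := by
      simpa [h2.deriv] using h2
    have H := (((h0.pow 2).mul ((hasDerivAt_const x E).sub hv0)).add
        ((h0.const_mul ((1:ℂ)/2)).mul h2')).sub ((h1'.pow 2).const_mul ((1:ℂ)/4))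
    convert H using 1
    · rfl
    · rfl
    · rfl
    simp only [Pi.sub_apply, Pi.pow_apply]
    have hE := hode x hx
    linear_combination (-(1/2) * Ξ x) * hE
  -- locally constant
  have loc : ∀ z ∈ U, ∀ᶠ w in nhds z, Q w = Q z := by
    intro z hz
    obtain ⟨ε, hε, hball⟩ := Metric.isOpen_iff.mp hU z hz
    filter_upwards [Metric.ball_mem_nhds z hε] with w hw
    refine (convex_ball z ε).is_const_of_fderivWithin_eq_zero
      (fun u hu => ((key u (hball hu)).differentiableAt).differentiableWithinAt)
      (fun u hu => ?_) hw (Metric.mem_ball_self hε)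
    rw [fderivWithin_of_isOpen Metric.isOpen_ball hu, (key u (hball hu)).hasFDerivAt.fderiv]
    exact ContinuousLinearMap.ext fun t => by simp
  -- conclude by connectedness
  intro x hx y hy
  by_contra hne
  have hu : IsOpen {z | z ∈ U ∧ Q z = Q x} := by
    rw [isOpen_iff_mem_nhds]
    rintro z ⟨hzU, hzQ⟩
    filter_upwards [loc z hzU, hU.mem_nhds hzU] with w hw hwU
    exact ⟨hwU, hw.trans hzQ⟩
  have hv' : IsOpen {z | z ∈ U ∧ Q z ≠ Q x} := by
    rw [isOpen_iff_mem_nhds]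
    rintro z ⟨hzU, hzQ⟩
    filter_upwards [loc z hzU, hU.mem_nhds hzU] with w hw hwU
    exact ⟨hwU, hw.symm ▸ hzQ⟩
  obtain ⟨w, hwU, ⟨-, hw1⟩, -, hw2⟩ := hUc.isPreconnected _ _ hu hv'
    (fun z hz => by by_cases h : Q z = Q x <;> [exact Or.inl ⟨hz, h⟩; exact Or.inr ⟨hz, h⟩])
    ⟨x, hx, hx, rfl⟩ ⟨y, hy, hy, fun h => hne h.symm⟩
  exact hw2 hw1
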